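/- Let s = (s_1, s_2) ∈ Z^2 with s_1 > s_2, and let S^0 be the symbol corresponding to the empty bipartition. Then for any n ∈ N, any k ∈ N, any i_1,...,i_k ∈ Z, and any r_1,...,r_k ∈ {1,2} with Σ r_j = n, if the vector F_{i_k}^{(r_k)} ··· F_{i_1}^{(r_1)} · v_{S^0} in the Fock space F'_s = V(Λ_{s_1}) ⊗ V(Λ_{s_2}) is nonzero, then there exist j_1,...,j_n ∈ Z such that F_{i_k}^{(r_k)} ··· F_{i_1}^{(r_1)} · v_{S^0} = F_{j_n} ··· F_{j_1} · v_{S^0}. -/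

import Mathlib

open Classical

/-- The diagonal coefficient of `K_i` on a basis vector `v_β` of `V(Λ_k)`:
`q` if `i ∈ β, i+1 ∉ β`, `q⁻¹` if `i ∉ β, i+1 ∈ β`, and `1` otherwise. -/
noncomputable def Kcoef (i : ℤ) (β : Set ℤ) : RatFunc ℚ :=
  if i ∈ β ∧ (i + 1) ∉ β then RatFunc.X
  else if i ∉ β ∧ (i + 1) ∈ β then RatFunc.X⁻¹
  else 1

/-- The operator `F_i` on the tensor product `V(Λ_{s_1}) ⊗ V(Λ_{s_2})` (with basis
indexed by pairs of subsets of `ℤ`), given by the coproduct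
`Δ(F_i) = F_i ⊗ K_i + 1 ⊗ F_i`. -/
noncomputable def F2 (i : ℤ) :
    ((Set ℤ × Set ℤ) →₀ RatFunc ℚ) →ₗ[RatFunc ℚ] ((Set ℤ × Set ℤ) →₀ RatFunc ℚ) :=
  Finsupp.lsum (RatFunc ℚ) fun p =>
    (if i ∈ p.1 ∧ (i + 1) ∉ p.1 then
        Kcoef i p.2 • Finsupp.lsingle ((p.1 \ {i}) ∪ {i + 1}, p.2) else 0)
      + (if i ∈ p.2 ∧ (i + 1) ∉ p.2 then
          Finsupp.lsingle (p.1, (p.2 \ {i}) ∪ {i + 1}) else 0)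

/-- The divided power `F_i^{(r)}` for `r = 1, 2`: `F_i^{(2)} = F_i²/[2]`, `[2] = q + q⁻¹`. -/
noncomputable def F2d (i : ℤ) (r : ℕ) :
    ((Set ℤ × Set ℤ) →₀ RatFunc ℚ) →ₗ[RatFunc ℚ] ((Set ℤ × Set ℤ) →₀ RatFunc ℚ) :=
  if r = 2 then (RatFunc.X + RatFunc.X⁻¹ : RatFunc ℚ)⁻¹ • (F2 i ∘ₗ F2 i) else F2 i

/-- The highest weight vector `v_{S⁰}` of `V(Λ_{s_1}) ⊗ V(Λ_{s_2})`. -/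
noncomputable def v0 (s1 s2 : ℤ) : (Set ℤ × Set ℤ) →₀ RatFunc ℚ :=
  Finsupp.single ({j | j ≤ s1}, {j | j ≤ s2}) 1

/-- Application of a word `F_{i_k}^{(r_k)} ⋯ F_{i_1}^{(r_1)}` (the list being
`[(i_1, r_1), …, (i_k, r_k)]`) to a vector. -/
noncomputable def applyW (L : List (ℤ × ℕ)) (v : (Set ℤ × Set ℤ) →₀ RatFunc ℚ) :
    (Set ℤ × Set ℤ) →₀ RatFunc ℚ :=
  L.foldl (fun w p => F2d p.1 p.2 w) v


/- ===== auxiliary development ===== -/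
noncomputable section Aux

abbrev VV := (Set ℤ × Set ℤ) →₀ RatFunc ℚ

def mvS (i : ℤ) (b : Set ℤ) : Set ℤ := (b \ {i}) ∪ {i+1}

lemma mem_mvS {x i : ℤ} {b : Set ℤ} : x ∈ mvS i b ↔ (x ∈ b ∧ x ≠ i) ∨ x = i + 1 := by
  simp [mvS]; tauto

def Amap (i : ℤ) : VV →ₗ[RatFunc ℚ] VV :=
  Finsupp.lsum (RatFunc ℚ) fun p =>
    if i ∈ p.1 ∧ (i+1) ∉ p.1 then Finsupp.lsingle (mvS i p.1, p.2) else 0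

def Bmap (i : ℤ) : VV →ₗ[RatFunc ℚ] VV :=
  Finsupp.lsum (RatFunc ℚ) fun p =>
    if i ∈ p.2 ∧ (i+1) ∉ p.2 then Finsupp.lsingle (p.1, mvS i p.2) else 0

def Kmap (i : ℤ) : VV →ₗ[RatFunc ℚ] VV :=
  Finsupp.lsum (RatFunc ℚ) fun p => Kcoef i p.2 • Finsupp.lsingle p

lemma Amap_single (i : ℤ) (b1 b2 : Set ℤ) (c : RatFunc ℚ) :
    Amap i (Finsupp.single (b1,b2) c) =
      if i ∈ b1 ∧ (i+1) ∉ b1 then Finsupp.single (mvS i b1, b2) c else 0 := by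
  rw [Amap, Finsupp.lsum_single]; split_ifs <;> simp

lemma Bmap_single (i : ℤ) (b1 b2 : Set ℤ) (c : RatFunc ℚ) :
    Bmap i (Finsupp.single (b1,b2) c) =
      if i ∈ b2 ∧ (i+1) ∉ b2 then Finsupp.single (b1, mvS i b2) c else 0 := by
  rw [Bmap, Finsupp.lsum_single]; split_ifs <;> simp

lemma Kmap_single (i : ℤ) (b1 b2 : Set ℤ) (c : RatFunc ℚ) :
    Kmap i (Finsupp.single (b1,b2) c) = Kcoef i b2 • Finsupp.single (b1,b2) c := by
  rw [Kmap, Finsupp.lsum_single]; simp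

lemma F2_single (i : ℤ) (b1 b2 : Set ℤ) (c : RatFunc ℚ) :
    F2 i (Finsupp.single (b1,b2) c) =
      (if i ∈ b1 ∧ (i+1) ∉ b1 then Kcoef i b2 • Finsupp.single (mvS i b1, b2) c else 0)
      + (if i ∈ b2 ∧ (i+1) ∉ b2 then Finsupp.single (b1, mvS i b2) c else 0) := by
  rw [F2, Finsupp.lsum_single]
  simp only [LinearMap.add_apply]
  congr 1 <;> split_ifs <;> simp [mvS]

lemma F2_decomp (i : ℤ) (v : VV) : F2 i v = Amap i (Kmap i v) + Bmap i v := by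
  have : F2 i = (Amap i ∘ₗ Kmap i) + Bmap i := by
    apply Finsupp.lhom_ext
    rintro ⟨b1, b2⟩ c
    simp only [LinearMap.add_apply, LinearMap.comp_apply, F2_single, Kmap_single,
      map_smul, Amap_single, Bmap_single]
    split_ifs <;> simp [mvS]
  rw [this]; rfl


lemma qX_ne : (RatFunc.X : RatFunc ℚ) ≠ 0 := RatFunc.X_ne_zero

lemma opap {f g : VV →ₗ[RatFunc ℚ] VV} (h : f = g) (v : VV) : f v = g v := by rw [h]

-- Kcoef computations
lemma Kcoef_q {i : ℤ} {b : Set ℤ} (h1 : i ∈ b) (h2 : (i+1) ∉ b) :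
    Kcoef i b = RatFunc.X := if_pos ⟨h1, h2⟩

lemma Kcoef_qinv {i : ℤ} {b : Set ℤ} (h1 : i ∉ b) (h2 : (i+1) ∈ b) :
    Kcoef i b = RatFunc.X⁻¹ := by
  rw [Kcoef, if_neg, if_pos ⟨h1, h2⟩]; rintro ⟨hc, -⟩; exact h1 hc

lemma Kcoef_one1 {i : ℤ} {b : Set ℤ} (h1 : i ∈ b) (h2 : (i+1) ∈ b) :
    Kcoef i b = 1 := by
  rw [Kcoef, if_neg, if_neg]
  · rintro ⟨hc, -⟩; exact hc h1
  · rintro ⟨-, hc⟩; exact hc h2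

lemma Kcoef_one2 {i : ℤ} {b : Set ℤ} (h1 : i ∉ b) (h2 : (i+1) ∉ b) :
    Kcoef i b = 1 := by
  rw [Kcoef, if_neg, if_neg]
  · rintro ⟨-, hc⟩; exact h2 hc
  · rintro ⟨hc, -⟩; exact h1 hc

lemma not_mem_mvS_self {i : ℤ} {b : Set ℤ} : i ∉ mvS i b := by
  intro hm; rcases mem_mvS.mp hm with ⟨-, hne⟩ | he <;> omega

lemma succ_mem_mvS {i : ℤ} {b : Set ℤ} : (i+1) ∈ mvS i b := mem_mvS.mpr (Or.inr rfl)

lemma mem_mvS_of_ne {x i : ℤ} {b : Set ℤ} (h1 : x ≠ i) (h2 : x ≠ i + 1) :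
    x ∈ mvS i b ↔ x ∈ b := by
  rw [mem_mvS]
  constructor
  · rintro (⟨hb, -⟩ | he)
    · exact hb
    · exact absurd he h2
  · intro hb; exact Or.inl ⟨hb, h1⟩

lemma Kcoef_mv_self {i : ℤ} {b : Set ℤ} :
    Kcoef i (mvS i b) = RatFunc.X⁻¹ :=
  Kcoef_qinv not_mem_mvS_self succ_mem_mvS

lemma Kcoef_mv_adj {i j : ℤ} {b : Set ℤ} (hadj : j = i+1 ∨ j = i-1)
    (h : j ∈ b ∧ (j+1) ∉ b) :
    Kcoef i (mvS j b) = RatFunc.X * Kcoef i b := by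
  rcases hadj with rfl | rfl
  · -- j = i+1 : i+1 removed; i unchanged
    have hi : i ∈ mvS (i+1) b ↔ i ∈ b := mem_mvS_of_ne (by omega) (by omega)
    have hi1 : (i+1) ∉ mvS (i+1) b := not_mem_mvS_self
    by_cases hib : i ∈ b
    · rw [Kcoef_q (hi.mpr hib) hi1, Kcoef_one1 hib h.1]; ring
    · rw [Kcoef_one2 (fun hc => hib (hi.mp hc)) hi1, Kcoef_qinv hib h.1,
        mul_inv_cancel₀ qX_ne]
  · -- j = i-1 : i added; i+1 unchanged
    have hi : i ∈ mvS (i-1) b := by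
      apply mem_mvS.mpr; right; omega
    have hi1 : (i+1) ∈ mvS (i-1) b ↔ (i+1) ∈ b := mem_mvS_of_ne (by omega) (by omega)
    have hib : i ∉ b := by have := h.2; simpa [show i - 1 + 1 = i by ring] using this
    by_cases hib1 : (i+1) ∈ b
    · rw [Kcoef_one1 hi (hi1.mpr hib1), Kcoef_qinv hib hib1, mul_inv_cancel₀ qX_ne]
    · rw [Kcoef_q hi (fun hc => hib1 (hi1.mp hc)), Kcoef_one2 hib hib1]; ring

lemma Kcoef_mv_far {i j : ℤ} {b : Set ℤ} (h1 : j ≠ i) (h2 : j ≠ i + 1) (h3 : i ≠ j + 1) :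
    Kcoef i (mvS j b) = Kcoef i b := by
  have e1 : i ∈ mvS j b ↔ i ∈ b := mem_mvS_of_ne (fun e => h1 e.symm) h3
  have e2 : (i+1) ∈ mvS j b ↔ (i+1) ∈ b :=
    mem_mvS_of_ne (fun e => h2 e.symm) (by omega)
  simp only [Kcoef, e1, e2]


-- moving sets commute (disjoint positions)
lemma mvS_comm {i j : ℤ} (h1 : j ≠ i) (h2 : j ≠ i + 1) (h3 : i ≠ j + 1) (b : Set ℤ) :
    mvS i (mvS j b) = mvS j (mvS i b) := by
  ext x
  by_cases hx : x ∈ b <;> simp [mem_mvS, hx] <;> omega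

lemma rAA (i : ℤ) (v : VV) : Amap i (Amap i v) = 0 := by
  induction v using Finsupp.induction_linear with
  | zero => simp
  | add f g hf hg => rw [map_add, map_add, hf, hg, add_zero]
  | single p c =>
    obtain ⟨b1, b2⟩ := p
    rw [Amap_single]
    split_ifs with h
    · rw [Amap_single, if_neg]
      rintro ⟨hc, -⟩; exact not_mem_mvS_self hc
    · simp

lemma rBB (i : ℤ) (v : VV) : Bmap i (Bmap i v) = 0 := by
  induction v using Finsupp.induction_linear with
  | zero => simp
  | add f g hf hg => rw [map_add, map_add, hf, hg, add_zero]
  | single p c =>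
    obtain ⟨b1, b2⟩ := p
    rw [Bmap_single]
    split_ifs with h
    · rw [Bmap_single, if_neg]
      rintro ⟨hc, -⟩; exact not_mem_mvS_self hc
    · simp

lemma rABA {i j : ℤ} (hadj : j = i+1 ∨ j = i-1) (v : VV) :
    Amap i (Amap j (Amap i v)) = 0 := by
  induction v using Finsupp.induction_linear with
  | zero => simp
  | add f g hf hg => rw [map_add, map_add, map_add, hf, hg, add_zero]
  | single p c =>
    obtain ⟨b1, b2⟩ := p
    rw [Amap_single]
    split_ifs with h
    · rw [Amap_single]
      split_ifs with h'
      · rw [Amap_single, if_neg]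
        rintro ⟨hc, hc'⟩
        rcases hadj with rfl | rfl
        · rcases mem_mvS.mp hc with ⟨hm, -⟩ | he
          · rcases mem_mvS.mp hm with ⟨-, hne⟩ | he' <;> omega
          · omega
        · exact hc' (by
            apply mem_mvS.mpr; left
            refine ⟨succ_mem_mvS, by omega⟩)
      · simp
    · simp

lemma rBBB {i j : ℤ} (hadj : j = i+1 ∨ j = i-1) (v : VV) :
    Bmap i (Bmap j (Bmap i v)) = 0 := by
  induction v using Finsupp.induction_linear with
  | zero => simp
  | add f g hf hg => rw [map_add, map_add, map_add, hf, hg, add_zero]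
  | single p c =>
    obtain ⟨b1, b2⟩ := p
    rw [Bmap_single]
    split_ifs with h
    · rw [Bmap_single]
      split_ifs with h'
      · rw [Bmap_single, if_neg]
        rintro ⟨hc, hc'⟩
        rcases hadj with rfl | rfl
        · rcases mem_mvS.mp hc with ⟨hm, -⟩ | he
          · rcases mem_mvS.mp hm with ⟨-, hne⟩ | he' <;> omega
          · omega
        · exact hc' (by
            apply mem_mvS.mpr; left
            refine ⟨succ_mem_mvS, by omega⟩)
      · simp
    · simp

lemma rAcomm {i j : ℤ} (h1 : j ≠ i) (h2 : j ≠ i + 1) (h3 : i ≠ j + 1) (v : VV) :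
    Amap i (Amap j v) = Amap j (Amap i v) := by
  induction v using Finsupp.induction_linear with
  | zero => simp
  | add f g hf hg => rw [map_add, map_add, map_add, map_add, hf, hg]
  | single p c =>
    obtain ⟨b1, b2⟩ := p
    have e1 : i ∈ mvS j b1 ↔ i ∈ b1 := mem_mvS_of_ne (fun e => h1 e.symm) h3
    have e2 : (i+1) ∈ mvS j b1 ↔ (i+1) ∈ b1 :=
      mem_mvS_of_ne (fun e => h2 e.symm) (by omega)
    have e3 : j ∈ mvS i b1 ↔ j ∈ b1 := mem_mvS_of_ne h1 (by omega)
    have e4 : (j+1) ∈ mvS i b1 ↔ (j+1) ∈ b1 :=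
      mem_mvS_of_ne (fun e => h3 e.symm) (by omega)
    rw [Amap_single, Amap_single]
    split_ifs with hA hB hB
    · rw [Amap_single, Amap_single, if_pos, if_pos, mvS_comm h1 h2 h3]
      · exact ⟨e3.mpr hA.1, fun hc => hA.2 (e4.mp hc)⟩
      · exact ⟨e1.mpr hB.1, fun hc => hB.2 (e2.mp hc)⟩
    · rw [Amap_single, if_neg, map_zero]
      rintro ⟨hc, hc'⟩; exact hB ⟨e1.mp hc, fun hm => hc' (e2.mpr hm)⟩
    · rw [Amap_single, if_neg, map_zero]
      rintro ⟨hc, hc'⟩; exact hA ⟨e3.mp hc, fun hm => hc' (e4.mpr hm)⟩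
    · rw [map_zero, map_zero]

lemma rBcomm {i j : ℤ} (h1 : j ≠ i) (h2 : j ≠ i + 1) (h3 : i ≠ j + 1) (v : VV) :
    Bmap i (Bmap j v) = Bmap j (Bmap i v) := by
  induction v using Finsupp.induction_linear with
  | zero => simp
  | add f g hf hg => rw [map_add, map_add, map_add, map_add, hf, hg]
  | single p c =>
    obtain ⟨b1, b2⟩ := p
    have e1 : i ∈ mvS j b2 ↔ i ∈ b2 := mem_mvS_of_ne (fun e => h1 e.symm) h3
    have e2 : (i+1) ∈ mvS j b2 ↔ (i+1) ∈ b2 :=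
      mem_mvS_of_ne (fun e => h2 e.symm) (by omega)
    have e3 : j ∈ mvS i b2 ↔ j ∈ b2 := mem_mvS_of_ne h1 (by omega)
    have e4 : (j+1) ∈ mvS i b2 ↔ (j+1) ∈ b2 :=
      mem_mvS_of_ne (fun e => h3 e.symm) (by omega)
    rw [Bmap_single, Bmap_single]
    split_ifs with hA hB hB
    · rw [Bmap_single, Bmap_single, if_pos, if_pos, mvS_comm h1 h2 h3]
      · exact ⟨e3.mpr hA.1, fun hc => hA.2 (e4.mp hc)⟩
      · exact ⟨e1.mpr hB.1, fun hc => hB.2 (e2.mp hc)⟩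
    · rw [Bmap_single, if_neg, map_zero]
      rintro ⟨hc, hc'⟩; exact hB ⟨e1.mp hc, fun hm => hc' (e2.mpr hm)⟩
    · rw [Bmap_single, if_neg, map_zero]
      rintro ⟨hc, hc'⟩; exact hA ⟨e3.mp hc, fun hm => hc' (e4.mpr hm)⟩
    · rw [map_zero, map_zero]

lemma rAB (i j : ℤ) (v : VV) : Amap i (Bmap j v) = Bmap j (Amap i v) := by
  induction v using Finsupp.induction_linear with
  | zero => simp
  | add f g hf hg => rw [map_add, map_add, map_add, map_add, hf, hg]
  | single p c =>
    obtain ⟨b1, b2⟩ := p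
    rw [Amap_single, Bmap_single]
    split_ifs with hA hB hB <;>
      simp [Amap_single, Bmap_single, hA, hB]

lemma rAK (i j : ℤ) (v : VV) : Amap i (Kmap j v) = Kmap j (Amap i v) := by
  induction v using Finsupp.induction_linear with
  | zero => simp
  | add f g hf hg => rw [map_add, map_add, map_add, map_add, hf, hg]
  | single p c =>
    obtain ⟨b1, b2⟩ := p
    rw [Kmap_single, Amap_single, map_smul, Amap_single]
    split_ifs with hA
    · rw [Kmap_single]
    · simp

lemma rKK (i j : ℤ) (v : VV) : Kmap i (Kmap j v) = Kmap j (Kmap i v) := by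
  induction v using Finsupp.induction_linear with
  | zero => simp
  | add f g hf hg => rw [map_add, map_add, map_add, map_add, hf, hg]
  | single p c =>
    obtain ⟨b1, b2⟩ := p
    simp only [Kmap_single, map_smul, smul_smul]
    rw [mul_comm (Kcoef j b2) (Kcoef i b2)]

lemma rBKsame (i : ℤ) (v : VV) :
    Bmap i (Kmap i v) = ((RatFunc.X : RatFunc ℚ) * RatFunc.X) • Kmap i (Bmap i v) := by
  induction v using Finsupp.induction_linear with
  | zero => simp
  | add f g hf hg => rw [map_add, map_add, map_add, map_add, smul_add, hf, hg]
  | single p c =>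
    obtain ⟨b1, b2⟩ := p
    simp only [Kmap_single, map_smul, Bmap_single]
    split_ifs with hB
    · simp only [Kmap_single, smul_smul]
      rw [Kcoef_q hB.1 hB.2, Kcoef_mv_self]
      congr 1
      field_simp
    · simp

lemma rBKadj {i j : ℤ} (hadj : j = i+1 ∨ j = i-1) (v : VV) :
    Bmap j (Kmap i v) = ((RatFunc.X : RatFunc ℚ))⁻¹ • Kmap i (Bmap j v) := by
  induction v using Finsupp.induction_linear with
  | zero => simp
  | add f g hf hg => rw [map_add, map_add, map_add, map_add, smul_add, hf, hg]
  | single p c =>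
    obtain ⟨b1, b2⟩ := p
    simp only [Kmap_single, map_smul, Bmap_single]
    split_ifs with hB
    · simp only [Kmap_single, smul_smul]
      rw [Kcoef_mv_adj hadj hB]
      congr 1
      rw [← mul_assoc, inv_mul_cancel₀ qX_ne, one_mul]
    · simp

lemma rBKfar {i j : ℤ} (h1 : j ≠ i) (h2 : j ≠ i + 1) (h3 : i ≠ j + 1) (v : VV) :
    Bmap j (Kmap i v) = Kmap i (Bmap j v) := by
  induction v using Finsupp.induction_linear with
  | zero => simp
  | add f g hf hg => rw [map_add, map_add, map_add, map_add, hf, hg]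
  | single p c =>
    obtain ⟨b1, b2⟩ := p
    simp only [Kmap_single, map_smul, Bmap_single]
    split_ifs with hB
    · rw [Kmap_single, Kcoef_mv_far h1 h2 h3]
    · simp


lemma qq1_ne : ((1 : RatFunc ℚ) + RatFunc.X * RatFunc.X) ≠ 0 := by
  have : ((1 : RatFunc ℚ) + RatFunc.X * RatFunc.X)
      = algebraMap (Polynomial ℚ) (RatFunc ℚ) (1 + Polynomial.X * Polynomial.X) := by
    rw [map_add, map_one, map_mul, RatFunc.algebraMap_X]
  rw [this]
  apply RatFunc.algebraMap_ne_zero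
  intro hp
  simpa using congrArg (Polynomial.eval 0) hp

lemma q2_ne : (RatFunc.X + RatFunc.X⁻¹ : RatFunc ℚ) ≠ 0 := by
  intro h
  apply qq1_ne
  have h' : RatFunc.X * (RatFunc.X + RatFunc.X⁻¹ : RatFunc ℚ) = 1 + RatFunc.X * RatFunc.X := by
    rw [mul_add, mul_inv_cancel₀ qX_ne, add_comm, mul_comm]
  rw [← h', h, mul_zero]

lemma scalar_key :
    ((RatFunc.X + RatFunc.X⁻¹ : RatFunc ℚ))⁻¹ * ((1 : RatFunc ℚ) + RatFunc.X * RatFunc.X)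
      = RatFunc.X := by
  rw [inv_mul_eq_iff_eq_mul₀ q2_ne, add_mul, inv_mul_cancel₀ qX_ne]
  ring

lemma F2F2 (i : ℤ) (v : VV) :
    F2 i (F2 i v) = ((1 : RatFunc ℚ) + RatFunc.X * RatFunc.X) • Amap i (Kmap i (Bmap i v)) := by
  rw [F2_decomp i v, map_add, F2_decomp, F2_decomp, rBB, add_zero,
    ← rAK i i (Kmap i v), rAA, zero_add,
    ← rAB i i (Kmap i v), rBKsame, map_smul, add_smul, one_smul]
  exact add_comm _ _

lemma F2d2_eq (i : ℤ) (v : VV) :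
    F2d i 2 v = (RatFunc.X : RatFunc ℚ) • Amap i (Kmap i (Bmap i v)) := by
  rw [F2d, if_pos rfl]
  rw [LinearMap.smul_apply, LinearMap.comp_apply, F2F2, smul_smul, scalar_key]

lemma F2dF2same (i : ℤ) (v : VV) : F2d i 2 (F2 i v) = 0 := by
  rw [F2d2_eq, F2_decomp i v, map_add, rBB, add_zero, ← rAB i i (Kmap i v), rBKsame]
  simp only [map_smul, smul_smul]
  rw [← rAK i i (Kmap i (Bmap i v)), rAA, smul_zero]

lemma F2comm_far {i j : ℤ} (h1 : j ≠ i) (h2 : j ≠ i + 1) (h3 : i ≠ j + 1) (v : VV) :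
    F2 i (F2 j v) = F2 j (F2 i v) := by
  have h1' : i ≠ j := fun e => h1 e.symm
  have e1 : Amap i (Kmap i (Amap j (Kmap j v))) = Amap j (Kmap j (Amap i (Kmap i v))) := by
    rw [← rAK j i (Kmap j v), rKK i j v, rAcomm h1 h2 h3, rAK i j (Kmap i v)]
  have e2 : Amap i (Kmap i (Bmap j v)) = Bmap j (Amap i (Kmap i v)) := by
    rw [← rBKfar h1 h2 h3, rAB]
  have e3 : Bmap i (Amap j (Kmap j v)) = Amap j (Kmap j (Bmap i v)) := by
    rw [← rAB j i (Kmap j v), rBKfar h1' (by omega) (by omega)]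
  have e4 : Bmap i (Bmap j v) = Bmap j (Bmap i v) := rBcomm h1 h2 h3 v
  calc F2 i (F2 j v)
      = (Amap i (Kmap i (Amap j (Kmap j v))) + Bmap i (Amap j (Kmap j v)))
        + (Amap i (Kmap i (Bmap j v)) + Bmap i (Bmap j v)) := by
        rw [F2_decomp j v, map_add, F2_decomp, F2_decomp]
    _ = (Amap j (Kmap j (Amap i (Kmap i v))) + Bmap j (Amap i (Kmap i v)))
        + (Amap j (Kmap j (Bmap i v)) + Bmap j (Bmap i v)) := by
        rw [e1, e2, e3, e4]; abel
    _ = F2 j (F2 i v) := by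
        rw [F2_decomp i v, map_add, F2_decomp, F2_decomp]

lemma F2dF2far {i j : ℤ} (h1 : j ≠ i) (h2 : j ≠ i + 1) (h3 : i ≠ j + 1) (v : VV) :
    F2d i 2 (F2 j v) = F2 j (F2d i 2 v) := by
  rw [F2d, if_pos rfl, LinearMap.smul_apply, LinearMap.smul_apply,
    LinearMap.comp_apply, LinearMap.comp_apply,
    F2comm_far h1 h2 h3 v, F2comm_far h1 h2 h3 (F2 i v), map_smul]

lemma serreAdj {i j : ℤ} (hadj : j = i+1 ∨ j = i-1) (v : VV) :
    F2d i 2 (F2 j v) + F2 j (F2d i 2 v) = F2 i (F2 j (F2 i v)) := by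
  have hadj' : i = j+1 ∨ i = j-1 := by
    rcases hadj with h | h
    · right; omega
    · left; omega
  -- LHS part 1
  have a1 : Bmap i (Kmap j v) = (RatFunc.X : RatFunc ℚ)⁻¹ • Kmap j (Bmap i v) :=
    rBKadj (i := j) (j := i) hadj' v
  have s1 : Bmap i (F2 j v)
      = (RatFunc.X : RatFunc ℚ)⁻¹ • Amap j (Kmap j (Bmap i v)) + Bmap i (Bmap j v) := by
    rw [F2_decomp j v, map_add, ← rAB j i (Kmap j v), a1, map_smul]
  have hL1 : F2d i 2 (F2 j v)
      = Amap i (Amap j (Kmap i (Kmap j (Bmap i v))))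
        + (RatFunc.X : RatFunc ℚ) • Amap i (Kmap i (Bmap i (Bmap j v))) := by
    rw [F2d2_eq, s1, map_add, map_smul, map_add, map_smul,
      ← rAK j i (Kmap j (Bmap i v)), smul_add, smul_smul,
      mul_inv_cancel₀ qX_ne, one_smul]
  -- LHS part 2
  have s3 : Bmap j (Amap i (Kmap i (Bmap i v)))
      = (RatFunc.X : RatFunc ℚ)⁻¹ • Amap i (Kmap i (Bmap j (Bmap i v))) := by
    rw [← rAB i j (Kmap i (Bmap i v)), rBKadj hadj (Bmap i v), map_smul]
  have hL2 : F2 j (F2d i 2 v)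
      = (RatFunc.X : RatFunc ℚ) • Amap j (Amap i (Kmap j (Kmap i (Bmap i v))))
        + Amap i (Kmap i (Bmap j (Bmap i v))) := by
    rw [F2d2_eq, map_smul, F2_decomp j, ← rAK i j (Kmap i (Bmap i v)), s3,
      smul_add, smul_smul, mul_inv_cancel₀ qX_ne, one_smul]
  -- RHS
  have u1 : Amap i (Kmap i (Amap j (Kmap j (Amap i (Kmap i v))))) = 0 := by
    rw [← rAK i j (Kmap i v), ← rAK j i (Amap i (Kmap j (Kmap i v))),
      ← rAK i i (Kmap j (Kmap i v)), rABA hadj]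
  have u2 : Bmap i (Amap j (Kmap j (Amap i (Kmap i v))))
      = (RatFunc.X : RatFunc ℚ) • Amap j (Amap i (Kmap j (Kmap i (Bmap i v)))) := by
    rw [← rAK i j (Kmap i v), ← rAB j i (Amap i (Kmap j (Kmap i v))),
      ← rAB i i (Kmap j (Kmap i v)), rBKadj (i := j) (j := i) hadj' (Kmap i v),
      rBKsame i v]
    simp only [map_smul, smul_smul]
    congr 1
    field_simp
  have u3 : Amap i (Kmap i (Bmap j (Amap i (Kmap i v)))) = 0 := by
    rw [← rAB i j (Kmap i v), ← rAK i i (Bmap j (Kmap i v)), rAA]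
  have u4 : Bmap i (Bmap j (Amap i (Kmap i v)))
      = (RatFunc.X : RatFunc ℚ) • Amap i (Kmap i (Bmap i (Bmap j v))) := by
    rw [← rAB i j (Kmap i v), ← rAB i i (Bmap j (Kmap i v)), rBKadj hadj v]
    simp only [map_smul]
    rw [rBKsame i (Bmap j v)]
    simp only [map_smul, smul_smul]
    congr 1
    field_simp
  have u5 : Amap i (Kmap i (Amap j (Kmap j (Bmap i v))))
      = Amap i (Amap j (Kmap i (Kmap j (Bmap i v)))) := by
    rw [← rAK j i (Kmap j (Bmap i v))]
  have u6 : Bmap i (Amap j (Kmap j (Bmap i v))) = 0 := by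
    rw [← rAB j i (Kmap j (Bmap i v)), rBKadj (i := j) (j := i) hadj' (Bmap i v),
      map_smul, rBB]
    simp
  have u8 : Bmap i (Bmap j (Bmap i v)) = 0 := rBBB hadj v
  have hR : F2 i (F2 j (F2 i v))
      = Amap i (Amap j (Kmap i (Kmap j (Bmap i v))))
        + (RatFunc.X : RatFunc ℚ) • Amap j (Amap i (Kmap j (Kmap i (Bmap i v))))
        + Amap i (Kmap i (Bmap j (Bmap i v)))
        + (RatFunc.X : RatFunc ℚ) • Amap i (Kmap i (Bmap i (Bmap j v))) := by
    rw [F2_decomp i v, map_add, F2_decomp j (Amap i (Kmap i v)), F2_decomp j (Bmap i v),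
      map_add, map_add, map_add,
      F2_decomp i (Amap j (Kmap j (Amap i (Kmap i v)))),
      F2_decomp i (Bmap j (Amap i (Kmap i v))),
      F2_decomp i (Amap j (Kmap j (Bmap i v))),
      F2_decomp i (Bmap j (Bmap i v)),
      u1, u2, u3, u4, u5, u6, u8]
    abel
  rw [hL1, hL2, hR]
  abel


/- ===== weights and supports ===== -/

def wtr (i : ℤ) (b : Set ℤ) : ℤ := (if i ∈ b then 1 else 0) - (if i+1 ∈ b then 1 else 0)

def wt (i : ℤ) (p : Set ℤ × Set ℤ) : ℤ := wtr i p.1 + wtr i p.2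

def aij (i j : ℤ) : ℤ := if i = j then 2 else if j = i+1 ∨ i = j+1 then -1 else 0

lemma wtr_mv {i j : ℤ} {b : Set ℤ} (h : j ∈ b ∧ (j+1) ∉ b) :
    wtr i (mvS j b) = wtr i b - aij i j := by
  by_cases h1 : i = j
  · subst h1
    have ha : aij i i = 2 := by rw [aij, if_pos rfl]
    rw [ha]
    simp only [wtr, if_pos succ_mem_mvS, if_neg not_mem_mvS_self, if_pos h.1, if_neg h.2]
    omega
  · by_cases h2 : i = j + 1
    · subst h2
      have e1 : (j+1) ∈ mvS j b := succ_mem_mvS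
      have e2 : (j+1+1) ∈ mvS j b ↔ (j+1+1) ∈ b := mem_mvS_of_ne (by omega) (by omega)
      have ha : aij (j+1) j = -1 := by rw [aij, if_neg (by omega), if_pos (by omega)]
      rw [ha]
      simp only [wtr, if_pos e1, e2, if_neg h.2]
      split_ifs <;> omega
    · by_cases h3 : j = i + 1
      · subst h3
        have e1 : i ∈ mvS (i+1) b ↔ i ∈ b := mem_mvS_of_ne (by omega) (by omega)
        have e2 : (i+1) ∉ mvS (i+1) b := not_mem_mvS_self
        have ha : aij i (i+1) = -1 := by rw [aij, if_neg (by omega), if_pos (by omega)]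
        rw [ha]
        simp only [wtr, e1, if_neg e2, if_pos h.1]
        split_ifs <;> omega
      · have e1 : i ∈ mvS j b ↔ i ∈ b := mem_mvS_of_ne h1 h2
        have e2 : (i+1) ∈ mvS j b ↔ (i+1) ∈ b :=
          mem_mvS_of_ne (by omega) (by omega)
        have ha : aij i j = 0 := by rw [aij, if_neg h1, if_neg (by omega)]
        rw [ha]
        simp only [wtr, e1, e2]
        omega

lemma wt_topmv {i j : ℤ} {p : Set ℤ × Set ℤ} (h : j ∈ p.1 ∧ (j+1) ∉ p.1) :
    wt i (mvS j p.1, p.2) = wt i p - aij i j := by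
  simp only [wt, wtr_mv h]
  ring

lemma wt_botmv {i j : ℤ} {p : Set ℤ × Set ℤ} (h : j ∈ p.2 ∧ (j+1) ∉ p.2) :
    wt i (p.1, mvS j p.2) = wt i p - aij i j := by
  simp only [wt, wtr_mv h]
  ring

lemma dm_wt {i : ℤ} {p : Set ℤ × Set ℤ}
    (h : (i ∈ p.1 ∧ (i+1) ∉ p.1) ∧ (i ∈ p.2 ∧ (i+1) ∉ p.2)) : wt i p = 2 := by
  simp only [wt, wtr, if_pos h.1.1, if_neg h.1.2, if_pos h.2.1, if_neg h.2.2]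
  omega

lemma supp_A {j : ℤ} {v : VV} {p : Set ℤ × Set ℤ} (hp : p ∈ (Amap j v).support) :
    ∃ q ∈ v.support, (j ∈ q.1 ∧ (j+1) ∉ q.1) ∧ p = (mvS j q.1, q.2) := by
  rw [Amap, Finsupp.lsum_apply] at hp
  obtain ⟨q, hq, hpq⟩ := Finset.mem_biUnion.mp (Finsupp.support_sum hp)
  refine ⟨q, hq, ?_⟩
  by_cases hc : j ∈ q.1 ∧ (j+1) ∉ q.1
  · rw [if_pos hc] at hpq
    simp only [Finsupp.lsingle_apply] at hpq
    have := Finsupp.support_single_subset hpq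
    simp only [Finset.mem_singleton] at this
    exact ⟨hc, this⟩
  · rw [if_neg hc] at hpq
    simp at hpq

lemma supp_B {j : ℤ} {v : VV} {p : Set ℤ × Set ℤ} (hp : p ∈ (Bmap j v).support) :
    ∃ q ∈ v.support, (j ∈ q.2 ∧ (j+1) ∉ q.2) ∧ p = (q.1, mvS j q.2) := by
  rw [Bmap, Finsupp.lsum_apply] at hp
  obtain ⟨q, hq, hpq⟩ := Finset.mem_biUnion.mp (Finsupp.support_sum hp)
  refine ⟨q, hq, ?_⟩
  by_cases hc : j ∈ q.2 ∧ (j+1) ∉ q.2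
  · rw [if_pos hc] at hpq
    simp only [Finsupp.lsingle_apply] at hpq
    have := Finsupp.support_single_subset hpq
    simp only [Finset.mem_singleton] at this
    exact ⟨hc, this⟩
  · rw [if_neg hc] at hpq
    simp at hpq

lemma supp_K {j : ℤ} {v : VV} {p : Set ℤ × Set ℤ} (hp : p ∈ (Kmap j v).support) :
    p ∈ v.support := by
  rw [Kmap, Finsupp.lsum_apply] at hp
  obtain ⟨q, hq, hpq⟩ := Finset.mem_biUnion.mp (Finsupp.support_sum hp)
  simp only [LinearMap.smul_apply, Finsupp.lsingle_apply] at hpq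
  have h2 := Finsupp.support_smul hpq
  have := Finsupp.support_single_subset h2
  simp only [Finset.mem_singleton] at this
  rwa [this]

lemma supp_F2 {j : ℤ} {v : VV} {p : Set ℤ × Set ℤ} (hp : p ∈ (F2 j v).support) :
    ∃ q ∈ v.support,
      ((j ∈ q.1 ∧ (j+1) ∉ q.1) ∧ p = (mvS j q.1, q.2)) ∨
      ((j ∈ q.2 ∧ (j+1) ∉ q.2) ∧ p = (q.1, mvS j q.2)) := by
  have hd : F2 j v = Amap j (Kmap j v) + Bmap j v := F2_decomp j v
  rw [hd] at hp
  rcases Finset.mem_union.mp (Finsupp.support_add hp) with h | h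
  · obtain ⟨q, hq, hm, hpq⟩ := supp_A h
    exact ⟨q, supp_K hq, Or.inl ⟨hm, hpq⟩⟩
  · obtain ⟨q, hq, hm, hpq⟩ := supp_B h
    exact ⟨q, hq, Or.inr ⟨hm, hpq⟩⟩


/- ===== words ===== -/

def MvW (J : List ℤ) (v : VV) : VV := applyW (J.map fun j => (j,1)) v

lemma F2d_one (j : ℤ) : F2d j 1 = F2 j := by
  rw [F2d, if_neg]; omega

lemma applyW_append (L1 L2 : List (ℤ × ℕ)) (v : VV) :
    applyW (L1 ++ L2) v = applyW L2 (applyW L1 v) := by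
  rw [applyW, applyW, applyW, List.foldl_append]

lemma MvW_snoc (J : List ℤ) (j : ℤ) (v : VV) :
    MvW (J ++ [j]) v = F2 j (MvW J v) := by
  rw [MvW, List.map_append, applyW_append, MvW]
  simp [applyW, F2d_one]

lemma wconst (s1 s2 i : ℤ) (J : List ℤ) :
    ∀ p ∈ (MvW J (v0 s1 s2)).support, ∀ q ∈ (MvW J (v0 s1 s2)).support,
      wt i p = wt i q := by
  induction J using List.reverseRecOn with
  | nil =>
    intro p hp q hq
    have h0 : (MvW [] (v0 s1 s2)).support = {({j | j ≤ s1}, {j | j ≤ s2})} := by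
      rw [MvW]
      simp only [List.map_nil, applyW, List.foldl_nil, v0]
      exact Finsupp.support_single_ne_zero _ one_ne_zero
    rw [h0, Finset.mem_singleton] at hp hq
    rw [hp, hq]
  | append_singleton J' j IH =>
    intro p hp q hq
    rw [MvW_snoc] at hp hq
    obtain ⟨p0, hp0, hpd⟩ := supp_F2 hp
    obtain ⟨q0, hq0, hqd⟩ := supp_F2 hq
    have e := IH p0 hp0 q0 hq0
    rcases hpd with ⟨hm, rfl⟩ | ⟨hm, rfl⟩ <;> rcases hqd with ⟨hm', rfl⟩ | ⟨hm', rfl⟩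
    · rw [wt_topmv hm, wt_topmv hm']; omega
    · rw [wt_topmv hm, wt_botmv hm']; omega
    · rw [wt_botmv hm, wt_topmv hm']; omega
    · rw [wt_botmv hm, wt_botmv hm']; omega

/- ===== vanishing of F2d 2 ===== -/

lemma N_single {i : ℤ} {p : Set ℤ × Set ℤ} {c : RatFunc ℚ}
    (h : ¬((i ∈ p.1 ∧ (i+1) ∉ p.1) ∧ (i ∈ p.2 ∧ (i+1) ∉ p.2))) :
    Amap i (Kmap i (Bmap i (Finsupp.single p c))) = 0 := by
  obtain ⟨b1, b2⟩ := p
  rw [Bmap_single]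
  by_cases h2 : i ∈ b2 ∧ (i+1) ∉ b2
  · rw [if_pos h2, Kmap_single, map_smul, Amap_single, if_neg, smul_zero]
    intro h1
    exact h ⟨h1, h2⟩
  · rw [if_neg h2]
    simp

lemma N_zero {i : ℤ} {v : VV}
    (h : ∀ p ∈ v.support, ¬((i ∈ p.1 ∧ (i+1) ∉ p.1) ∧ (i ∈ p.2 ∧ (i+1) ∉ p.2))) :
    Amap i (Kmap i (Bmap i v)) = 0 := by
  conv_lhs => rw [← Finsupp.sum_single v]
  rw [map_finsuppSum, map_finsuppSum, map_finsuppSum, Finsupp.sum]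
  apply Finset.sum_eq_zero
  intro p hp
  exact N_single (h p hp)

lemma F2d2_zero {i : ℤ} {v : VV}
    (h : ∀ p ∈ v.support, ¬((i ∈ p.1 ∧ (i+1) ∉ p.1) ∧ (i ∈ p.2 ∧ (i+1) ∉ p.2))) :
    F2d i 2 v = 0 := by
  rw [F2d2_eq, N_zero h, smul_zero]

lemma exists_dm {i : ℤ} {v : VV} (h : F2d i 2 v ≠ 0) :
    ∃ p ∈ v.support, (i ∈ p.1 ∧ (i+1) ∉ p.1) ∧ (i ∈ p.2 ∧ (i+1) ∉ p.2) := by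
  by_contra hc
  push_neg at hc
  apply h
  apply F2d2_zero
  intro p hp
  rintro ⟨h1, h2a, h2b⟩
  exact h2b (hc p hp h1 h2a)

/- ===== the key induction ===== -/

lemma key (s1 s2 : ℤ) (hne : s1 ≠ s2) (i : ℤ) (J : List ℤ)
    (hnz : F2d i 2 (MvW J (v0 s1 s2)) ≠ 0) :
    ∃ J' : List ℤ, J'.length = J.length + 2 ∧
      MvW J' (v0 s1 s2) = F2d i 2 (MvW J (v0 s1 s2)) := by
  induction J using List.reverseRecOn with
  | nil =>
    exfalso
    apply hnz
    apply F2d2_zero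
    intro p hp
    have h0 : (MvW [] (v0 s1 s2)).support = {({j | j ≤ s1}, {j | j ≤ s2})} := by
      rw [MvW]
      simp only [List.map_nil, applyW, List.foldl_nil, v0]
      exact Finsupp.support_single_ne_zero _ one_ne_zero
    rw [h0, Finset.mem_singleton] at hp
    subst hp
    rintro ⟨⟨ha1, ha2⟩, ⟨hb1, hb2⟩⟩
    simp only [Set.mem_setOf_eq] at ha1 ha2 hb1 hb2
    omega
  | append_singleton J'' j IH =>
    rw [MvW_snoc] at hnz ⊢
    by_cases hji : j = i
    · exfalso
      subst hji
      exact hnz (F2dF2same j (MvW J'' (v0 s1 s2)))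
    · by_cases hadj : j = i + 1 ∨ j = i - 1
      · -- adjacent case
        set u := MvW J'' (v0 s1 s2) with hu
        have hzero : F2d i 2 u = 0 := by
          apply F2d2_zero
          intro p hp hdm
          -- find a doubly movable element in the support of F2 j u
          obtain ⟨pstar, hps, hdms⟩ := exists_dm hnz
          obtain ⟨p0, hp0, hpd⟩ := supp_F2 hps
          have hwstar : wt i pstar = 2 := dm_wt hdms
          have haij : aij i j = -1 := by
            rw [aij, if_neg (fun e => hji e.symm), if_pos (by omega)]
          have hw0 : wt i p0 = 1 := by
            rcases hpd with ⟨hm, rfl⟩ | ⟨hm, rfl⟩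
            · rw [wt_topmv hm, haij] at hwstar; omega
            · rw [wt_botmv hm, haij] at hwstar; omega
          have hwp : wt i p = wt i p0 := wconst s1 s2 i J'' p hp p0 hp0
          have : wt i p = 2 := dm_wt hdm
          omega
        have hserre := serreAdj hadj u
        rw [hzero, map_zero, add_zero] at hserre
        refine ⟨J'' ++ [i, j, i], ?_, ?_⟩
        · simp
        · have : J'' ++ [i, j, i] = ((J'' ++ [i]) ++ [j]) ++ [i] := by simp
          rw [this, MvW_snoc, MvW_snoc, MvW_snoc, ← hu, hserre]
      · -- far case
        push_neg at hadj
        have h1 : j ≠ i := hji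
        have h2 : j ≠ i + 1 := hadj.1
        have h3 : i ≠ j + 1 := by
          intro e
          exact hadj.2 (by omega)
        rw [F2dF2far h1 h2 h3] at hnz ⊢
        have hnz' : F2d i 2 (MvW J'' (v0 s1 s2)) ≠ 0 := by
          intro h0
          rw [h0, map_zero] at hnz
          exact hnz rfl
        obtain ⟨J0, hlen, hJ0⟩ := IH hnz'
        refine ⟨J0 ++ [j], ?_, ?_⟩
        · simp [hlen]
        · rw [MvW_snoc, hJ0]

end Aux


/-- for `s_1 > s_2`, any nonzero vector
`F_{i_k}^{(r_k)} ⋯ F_{i_1}^{(r_1)} · v_{S⁰}` with all `r_j ∈ {1, 2}` and `Σ r_j = n`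
can be written as `F_{j_n} ⋯ F_{j_1} · v_{S⁰}`. -/
theorem stmt13 (s1 s2 : ℤ) (h : s2 < s1) (n : ℕ) (L : List (ℤ × ℕ))
    (hr : ∀ p ∈ L, p.2 = 1 ∨ p.2 = 2)
    (hsum : (L.map Prod.snd).sum = n)
    (hnz : applyW L (v0 s1 s2) ≠ 0) :
    ∃ J : List ℤ, J.length = n ∧
      applyW (J.map fun j => (j, 1)) (v0 s1 s2) = applyW L (v0 s1 s2) := by
  have hne : s1 ≠ s2 := by omega
  induction L using List.reverseRecOn generalizing n with
  | nil =>
    refine ⟨[], ?_, ?_⟩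
    · simpa using hsum
    · rfl
  | append_singleton L'' pr IH =>
    obtain ⟨i, r⟩ := pr
    have happ : applyW (L'' ++ [(i, r)]) (v0 s1 s2) = F2d i r (applyW L'' (v0 s1 s2)) := by
      rw [applyW_append]; rfl
    have hr' : r = 1 ∨ r = 2 := by simpa using hr (i, r) (by simp)
    have hnz'' : applyW L'' (v0 s1 s2) ≠ 0 := by
      intro h0
      rw [happ, h0, map_zero] at hnz
      exact hnz rfl
    obtain ⟨J'', hlen'', hJ''⟩ :=
      IH ((L''.map Prod.snd).sum) (fun p hp => hr p (by simp [hp])) rfl hnz''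
    rcases hr' with rfl | rfl
    · refine ⟨J'' ++ [i], ?_, ?_⟩
      · have hn : (L''.map Prod.snd).sum + 1 = n := by rw [← hsum]; simp
        simp only [List.length_append, List.length_cons, List.length_nil, hlen'']
        omega
      · show MvW (J'' ++ [i]) (v0 s1 s2) = _
        rw [MvW_snoc, show MvW J'' (v0 s1 s2) = applyW L'' (v0 s1 s2) from hJ'',
          happ, F2d_one]
    · have hkey : F2d i 2 (MvW J'' (v0 s1 s2)) ≠ 0 := by
        have e : MvW J'' (v0 s1 s2) = applyW L'' (v0 s1 s2) := hJ''
        rw [e]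
        intro h0
        rw [happ] at hnz
        exact hnz h0
      obtain ⟨J', hlen', hJ'⟩ := key s1 s2 hne i J'' hkey
      refine ⟨J', ?_, ?_⟩
      · have hn : (L''.map Prod.snd).sum + 2 = n := by rw [← hsum]; simp
        omega
      · show MvW J' (v0 s1 s2) = _
        rw [hJ', show MvW J'' (v0 s1 s2) = applyW L'' (v0 s1 s2) from hJ'', happ]
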